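/- If r_1 = r_2 = ... = r_g = N/g, then any code C ⊆ F_{q^m}^N with |C| ≥ 2 satisfies |C| ≤ (q^{N/g})^{gm − d_SR(C) + 1}. Consequently, if d_SR(C) > 1 and C is MSRD (i.e., |C| = q^{m(N − d_SR(C) + 1)}), then m ≥ N/g. -/

import Mathlib

/-- Sum-rank weight of a block vector over `Fq`: sum over the blocks of the
`Fq`-rank of the block (i.e. the `Fq`-dimension of the span of its entries). -/
noncomputable def srWeight (Fq : Type*) [Field Fq] {F : Type*} [Field F] [Algebra Fq F]
    {g : ℕ} {r : Fin g → ℕ} (c : ∀ i : Fin g, Fin (r i) → F) : ℕ :=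
  ∑ i, Module.finrank Fq (Submodule.span Fq (Set.range (c i)))

/-- Minimum sum-rank distance of a (possibly nonlinear) code. -/
noncomputable def srMinDist (Fq : Type*) [Field Fq] {F : Type*} [Field F] [Algebra Fq F]
    {g : ℕ} {r : Fin g → ℕ} (C : Set (∀ i : Fin g, Fin (r i) → F)) : ℕ :=
  sInf {w | ∃ c ∈ C, ∃ d ∈ C, c ≠ d ∧ w = srWeight Fq (c - d)}

/-- Hamming weight of a block vector. -/
noncomputable def hamWeight {F : Type*} [Field F] [DecidableEq F]
    {g : ℕ} {r : Fin g → ℕ} (c : ∀ i : Fin g, Fin (r i) → F) : ℕ :=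
  ∑ i, (Finset.univ.filter fun j => c i j ≠ 0).card

/-- Minimum Hamming distance of a (possibly nonlinear) code. -/
noncomputable def hamMinDist {F : Type*} [Field F] [DecidableEq F]
    {g : ℕ} {r : Fin g → ℕ} (C : Set (∀ i : Fin g, Fin (r i) → F)) : ℕ :=
  sInf {w | ∃ c ∈ C, ∃ d ∈ C, c ≠ d ∧ w = hamWeight (c - d)}

/-- Blockwise multiplication of a block vector by a block-diagonal matrix
`diag(A_1, …, A_g)` with entries in the subfield `Fq`. -/
noncomputable def blockMul {Fq F : Type*} [Field Fq] [Field F] [Algebra Fq F]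
    {g : ℕ} {r n : Fin g → ℕ} (c : ∀ i : Fin g, Fin (r i) → F)
    (A : ∀ i : Fin g, Matrix (Fin (r i)) (Fin (n i)) Fq) :
    ∀ i : Fin g, Fin (n i) → F :=
  fun i j => ∑ t, c i t * algebraMap Fq F (A i t j)



open scoped Classical

section Aux
variable {Fq F : Type*} [Field Fq] [Fintype Fq] [Field F] [Fintype F] [Algebra Fq F]
variable {g r0 : ℕ}

set_option linter.unusedSectionVars false
set_option maxHeartbeats 1000000

lemma aux_srWeight_le_support (b : Module.Basis (Fin (Module.finrank Fq F)) Fq F)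
    (x : ∀ _ : Fin g, Fin r0 → F) :
    srWeight Fq (r := fun _ => r0) x ≤
      (Finset.univ.filter fun p : Fin g × Fin (Module.finrank Fq F) =>
        ∃ j, b.repr (x p.1 j) p.2 ≠ 0).card := by
  have hcard : (Finset.univ.filter fun p : Fin g × Fin (Module.finrank Fq F) =>
        ∃ j, b.repr (x p.1 j) p.2 ≠ 0).card
      = ∑ i, (Finset.univ.filter fun k => ∃ j, b.repr (x i j) k ≠ 0).card := by
    rw [Finset.card_filter, Fintype.sum_prod_type]
    exact Finset.sum_congr rfl fun i _ => (Finset.card_filter _ _).symm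
  rw [hcard]
  unfold srWeight
  refine Finset.sum_le_sum fun i _ => ?_
  set S : Finset (Fin (Module.finrank Fq F)) :=
    Finset.univ.filter fun k => ∃ j, b.repr (x i j) k ≠ 0 with hS
  have hsub : Submodule.span Fq (Set.range (x i)) ≤ Submodule.span Fq ↑(S.image b) := by
    rw [Submodule.span_le]
    rintro v ⟨j, rfl⟩
    simp only [SetLike.mem_coe]
    have h1 : ∑ k ∈ S, b.repr (x i j) k • b k = x i j := by
      have h2 : ∑ k ∈ S, b.repr (x i j) k • b k
          = ∑ k, b.repr (x i j) k • b k := by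
        refine Finset.sum_subset (Finset.subset_univ S) fun k _ hk => ?_
        have hk0 : b.repr (x i j) k = 0 := by
          by_contra h
          apply hk
          rw [hS, Finset.mem_filter]
          exact ⟨Finset.mem_univ k, j, h⟩
        rw [hk0, zero_smul]
      rw [h2, b.sum_repr]
    rw [← h1]
    refine Submodule.sum_mem _ fun k hk => Submodule.smul_mem _ _ ?_
    refine Submodule.subset_span ?_
    rw [Finset.coe_image]
    exact ⟨k, hk, rfl⟩
  have h1 : Module.finrank Fq (Submodule.span Fq (Set.range (x i)))
      ≤ Module.finrank Fq (Submodule.span Fq ↑(S.image b)) := Submodule.finrank_mono hsub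
  have h2 : Module.finrank Fq (Submodule.span Fq (↑(S.image b) : Set F)) ≤ (S.image b).card :=
    finrank_span_finset_le_card _
  exact le_trans h1 (le_trans h2 Finset.card_image_le)

lemma aux_srWeight_le (x : ∀ _ : Fin g, Fin r0 → F) :
    srWeight Fq (r := fun _ => r0) x ≤ g * r0 ∧
      srWeight Fq (r := fun _ => r0) x ≤ g * Module.finrank Fq F := by
  constructor
  · unfold srWeight
    have hstep : ∀ i : Fin g,
        Module.finrank Fq (Submodule.span Fq (Set.range (x i))) ≤ r0 := by
      intro i
      have hr : Set.range (x i) = ↑(Finset.univ.image (x i)) := by simp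
      rw [hr]
      have h2 : Module.finrank Fq
          (Submodule.span Fq (↑(Finset.univ.image (x i)) : Set F))
          ≤ (Finset.univ.image (x i)).card := finrank_span_finset_le_card _
      exact le_trans h2 (le_trans Finset.card_image_le (by simp))
    have := Finset.sum_le_sum fun i (_ : i ∈ Finset.univ) => hstep i
    simpa [Finset.sum_const, mul_comm] using this
  · unfold srWeight
    have := Finset.sum_le_sum fun (i : Fin g) (_ : i ∈ Finset.univ) =>
      Submodule.finrank_le (Submodule.span Fq (Set.range (x i)))
    simpa [Finset.sum_const, mul_comm] using this

lemma aux_srWeight_pos (x : ∀ _ : Fin g, Fin r0 → F) (hx : x ≠ 0) :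
    0 < srWeight Fq (r := fun _ => r0) x := by
  by_contra h
  push_neg at h
  apply hx
  have h0 : srWeight Fq (r := fun _ => r0) x = 0 := Nat.le_zero.mp h
  unfold srWeight at h0
  rw [Finset.sum_eq_zero_iff] at h0
  funext i j
  have hb : Submodule.span Fq (Set.range (x i)) = ⊥ :=
    Submodule.finrank_eq_zero.mp (h0 i (Finset.mem_univ i))
  have hmem : x i j ∈ Submodule.span Fq (Set.range (x i)) :=
    Submodule.subset_span ⟨j, rfl⟩
  rw [hb] at hmem
  simpa using hmem

end Aux

set_option maxHeartbeats 1000000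

/-- for equal block lengths `r_1 = … = r_g = N/g = r0`, every code
satisfies `|C| ≤ (q^{r0})^{gm − d_SR(C) + 1}`; consequently an MSRD code with
`d_SR(C) > 1` can exist only if `m ≥ r0`. -/
theorem second_singleton_bound_equal_blocks
    {Fq F : Type*} [Field Fq] [Fintype Fq] [Field F] [Fintype F] [Algebra Fq F]
    {g r0 : ℕ} (hg : 0 < g)
    (C : Set (∀ _ : Fin g, Fin r0 → F)) (hC : C.Nontrivial) :
    (Nat.card C ≤
        (Fintype.card Fq ^ r0) ^
          (g * Module.finrank Fq F - srMinDist Fq (r := fun _ => r0) C + 1)) ∧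
      (1 < srMinDist Fq (r := fun _ => r0) C →
        Nat.card C =
          Fintype.card Fq ^
            (Module.finrank Fq F * (g * r0 - srMinDist Fq (r := fun _ => r0) C + 1)) →
        r0 ≤ Module.finrank Fq F) := by
  classical
  obtain ⟨c₀, hc₀, c₁, hc₁, hne⟩ := hC
  have hm1 : 0 < Module.finrank Fq F := Module.finrank_pos
  set m := Module.finrank Fq F with hmdef
  set d := srMinDist Fq (r := fun _ => r0) C with hddef
  -- d is attained by a nonzero difference
  have hdmem : d ∈ {w | ∃ c ∈ C, ∃ d' ∈ C, c ≠ d' ∧ w = srWeight Fq (c - d')} := by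
    rw [hddef, srMinDist]
    exact Nat.sInf_mem ⟨srWeight Fq (c₀ - c₁), c₀, hc₀, c₁, hc₁, hne, rfl⟩
  obtain ⟨a, ha, a', ha', haa, hdw⟩ := hdmem
  have hane : a - a' ≠ 0 := sub_ne_zero.mpr haa
  have hd1 : 1 ≤ d := by rw [hdw]; exact aux_srWeight_pos _ hane
  have hdgm : d ≤ g * m := by rw [hdw]; exact (aux_srWeight_le _).2
  have hdgr : d ≤ g * r0 := by rw [hdw]; exact (aux_srWeight_le _).1
  have hdle : ∀ c ∈ C, ∀ c' ∈ C, c ≠ c' → d ≤ srWeight Fq (c - c') := by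
    intro c hc c' hc' h
    rw [hddef, srMinDist]
    exact Nat.sInf_le ⟨c, hc, c', hc', h, rfl⟩
  -- the basis
  let b : Module.Basis (Fin m) Fq F := Module.finBasis Fq F
  -- choose a coordinate set T of size g*m - (d-1)
  obtain ⟨T, -, hT⟩ := Finset.exists_subset_card_eq
    (s := (Finset.univ : Finset (Fin g × Fin m))) (n := g * m - (d - 1))
    (by rw [Finset.card_univ, Fintype.card_prod, Fintype.card_fin, Fintype.card_fin]
        omega)
  -- the projection map on T is injective on C
  let f : C → (↥T → (Fin r0 → Fq)) :=
    fun c p j => b.repr ((c : ∀ _ : Fin g, Fin r0 → F) p.1.1 j) p.1.2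
  have hf : Function.Injective f := by
    intro c c' hcc
    by_contra hne'
    have hxne : (c : ∀ _ : Fin g, Fin r0 → F) - (c' : ∀ _ : Fin g, Fin r0 → F) ≠ 0 :=
      sub_ne_zero.mpr fun h => hne' (Subtype.ext h)
    have hge : d ≤ srWeight Fq ((c : ∀ _ : Fin g, Fin r0 → F) - (c' : ∀ _ : Fin g, Fin r0 → F)) :=
      hdle _ c.2 _ c'.2 fun h => hne' (Subtype.ext h)
    have hsupp : (Finset.univ.filter fun p : Fin g × Fin m =>
        ∃ j, b.repr (((c : ∀ _ : Fin g, Fin r0 → F) - (c' : ∀ _ : Fin g, Fin r0 → F)) p.1 j) p.2 ≠ 0)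
        ⊆ Finset.univ \ T := by
      intro p hp
      rw [Finset.mem_filter] at hp
      obtain ⟨-, j, hj⟩ := hp
      rw [Finset.mem_sdiff]
      refine ⟨Finset.mem_univ p, fun hpT => hj ?_⟩
      have hcj := congrFun (congrFun hcc ⟨p, hpT⟩) j
      simp only [f] at hcj
      show b.repr ((c : ∀ _ : Fin g, Fin r0 → F) p.1 j
        - (c' : ∀ _ : Fin g, Fin r0 → F) p.1 j) p.2 = 0
      rw [map_sub, Finsupp.sub_apply, hcj, sub_self]
    have hle : srWeight Fq ((c : ∀ _ : Fin g, Fin r0 → F) - (c' : ∀ _ : Fin g, Fin r0 → F))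
        ≤ (Finset.univ \ T).card :=
      le_trans (aux_srWeight_le_support b _) (Finset.card_le_card hsupp)
    have hcd : (Finset.univ \ T).card = d - 1 := by
      rw [Finset.card_sdiff_of_subset (Finset.subset_univ T), hT, Finset.card_univ,
        Fintype.card_prod, Fintype.card_fin, Fintype.card_fin]
      omega
    omega
  -- the cardinality bound
  have hcard : Nat.card C ≤ (Fintype.card Fq ^ r0) ^ (g * m - d + 1) := by
    have h1 := Nat.card_le_card_of_injective f hf
    rw [Nat.card_eq_fintype_card (α := ↥T → (Fin r0 → Fq)), Fintype.card_fun,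
      Fintype.card_fun, Fintype.card_coe, Fintype.card_fin, hT] at h1
    have : g * m - (d - 1) = g * m - d + 1 := by omega
    rwa [this] at h1
  refine ⟨hcard, ?_⟩
  intro hd2 hMSRD
  have hq : 1 < Fintype.card Fq := Fintype.one_lt_card
  have hexp : m * (g * r0 - d + 1) ≤ r0 * (g * m - d + 1) := by
    have h2 : Fintype.card Fq ^ (m * (g * r0 - d + 1))
        ≤ Fintype.card Fq ^ (r0 * (g * m - d + 1)) := by
      rw [← hMSRD]
      calc Nat.card C ≤ (Fintype.card Fq ^ r0) ^ (g * m - d + 1) := hcard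
        _ = Fintype.card Fq ^ (r0 * (g * m - d + 1)) := by rw [← pow_mul]
    exact (Nat.pow_le_pow_iff_right hq).mp h2
  have hr0 : 0 < r0 := by
    rcases Nat.eq_zero_or_pos r0 with h | h
    · exfalso; apply hne; subst h; funext i j; exact j.elim0
    · exact h
  by_contra hmr
  push_neg at hmr
  zify [hdgr, hdgm] at hexp
  have hMR : (m : ℤ) < r0 := by exact_mod_cast hmr
  have hD : (2 : ℤ) ≤ d := by exact_mod_cast hd2
  nlinarith [mul_pos (show (0:ℤ) < (r0 : ℤ) - m by omega)
    (show (0:ℤ) < (d : ℤ) - 1 by omega)]
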